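/- Let R be a field and C̃ an S-complex over R with h(C̃) = 0. Then C̃ is locally equivalent to the trivial S-complex C̃⁰ = R. In fact there exists α ∈ C_* with d(α) = δ₂(1), the map λ̃: C̃⁰ → C̃ with components λ = 0, μ = 0, Δ₁ = 0 and Δ₂(1) = α is a morphism of S-complexes, and there also exists a morphism of S-complexes C̃ → C̃⁰. -/

import Mathlib

/-!  S-complexes over a commutative ring `R` (following Daemi–Scaduto).

An S-complex is a ℤ-graded finitely generated free chain complex
`C̃ = C ⊕ C[1] ⊕ R` determined by the data of `C` together with maps
`d, v, δ₁, δ₂`.  We encode the graded module `C` by a single module `Tot`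
together with an internal ℤ-grading by submodules, and we carry the sign
map `ε` (multiplication by `(-1)^i` on the degree `i` part) as data. -/

universe u

/-- The data of an S-complex over `R`: a module `Tot` (the total module of the
ℤ-graded module `C_*`), its grading, the sign map `ε`, and the structure maps
`d : C_* → C_{*-1}`, `v : C_* → C_{*-2}`, `δ₁ : C_* → R` (supported in degree 1),
`δ₂ : R → C_{-2}`. -/
structure SComplexData (R : Type u) [CommRing R] where
  Tot : Type u
  [acg : AddCommGroup Tot]
  [mod : Module R Tot]
  grading : ℤ → Submodule R Tot
  sign : Tot →ₗ[R] Tot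
  d : Tot →ₗ[R] Tot
  v : Tot →ₗ[R] Tot
  δ₁ : Tot →ₗ[R] R
  δ₂ : R →ₗ[R] Tot

attribute [instance] SComplexData.acg SComplexData.mod

namespace SComplexData

variable {R : Type u} [CommRing R]

/-- The axioms making the data of `X : SComplexData R` into a genuine S-complex:
the grading is an internal direct sum decomposition into finitely generated free
pieces, the sign map is `(-1)^i` on the degree `i` piece, the structure maps are
graded of the appropriate degrees (`δ₁` supported on `C_1`, `δ₂` valued in `C_{-2}`),
and the S-complex relations `d∘d = 0`, `δ₁∘d = 0`, `d∘δ₂ = 0`,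
`d∘v − v∘d − δ₂∘δ₁ = 0` hold; the latter are equivalent to `d̃ ∘ d̃ = 0` for the
differential `d̃(α, β, r) = (dα, vα − dβ + δ₂ r, δ₁ α)` on `C̃ = C ⊕ C[1] ⊕ R`. -/
structure IsSComplex (X : SComplexData R) : Prop where
  internal : DirectSum.IsInternal X.grading
  free : ∀ i : ℤ, Module.Free R ↥(X.grading i)
  finite : Module.Finite R X.Tot
  sign_spec : ∀ i : ℤ, ∀ x ∈ X.grading i, X.sign x = if Even i then x else -x
  d_deg : ∀ i : ℤ, (X.grading i).map X.d ≤ X.grading (i - 1)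
  v_deg : ∀ i : ℤ, (X.grading i).map X.v ≤ X.grading (i - 2)
  δ₁_deg : ∀ i : ℤ, i ≠ 1 → ∀ x ∈ X.grading i, X.δ₁ x = 0
  δ₂_deg : LinearMap.range X.δ₂ ≤ X.grading (-2)
  d_d : X.d ∘ₗ X.d = 0
  δ₁_d : X.δ₁ ∘ₗ X.d = 0
  d_δ₂ : X.d ∘ₗ X.δ₂ = 0
  d_v : X.d ∘ₗ X.v - X.v ∘ₗ X.d - X.δ₂ ∘ₗ X.δ₁ = 0

/-- A morphism of S-complexes `λ̃ : C̃ → C̃'`, i.e. a degree-0 chain map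
`λ̃(α, β, r) = (λ α, μ α + λ β + Δ₂ r, Δ₁ α + r)`, recorded through its
components `λ, μ, Δ₁, Δ₂` (here `l` stands for `λ`). -/
structure SMorphism (X Y : SComplexData R) where
  l : X.Tot →ₗ[R] Y.Tot
  μ : X.Tot →ₗ[R] Y.Tot
  Δ₁ : X.Tot →ₗ[R] R
  Δ₂ : R →ₗ[R] Y.Tot
  l_deg : ∀ i : ℤ, (X.grading i).map l ≤ Y.grading i
  μ_deg : ∀ i : ℤ, (X.grading i).map μ ≤ Y.grading (i - 1)
  Δ₁_deg : ∀ i : ℤ, i ≠ 0 → ∀ x ∈ X.grading i, Δ₁ x = 0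
  Δ₂_deg : LinearMap.range Δ₂ ≤ Y.grading (-1)
  comm_d : l ∘ₗ X.d = Y.d ∘ₗ l
  comm_δ₁ : Δ₁ ∘ₗ X.d + X.δ₁ = Y.δ₁ ∘ₗ l
  comm_δ₂ : Y.d ∘ₗ Δ₂ + l ∘ₗ X.δ₂ = Y.δ₂
  comm_v : μ ∘ₗ X.d + Y.d ∘ₗ μ + l ∘ₗ X.v - Y.v ∘ₗ l + Δ₂ ∘ₗ X.δ₁ - Y.δ₂ ∘ₗ Δ₁ = 0

end SComplexData

/-- Functions `ℕ → M` with finitely many nonzero values (i.e. support bounded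
above); this realizes the polynomial module `M[x]`. -/
def NatBdd (R : Type u) [CommRing R] (M : Type u) [AddCommGroup M] [Module R M] :
    Submodule R (ℕ → M) where
  carrier := {f | ∃ N : ℕ, ∀ n : ℕ, N < n → f n = 0}
  add_mem' := by
    rintro f g ⟨N, hN⟩ ⟨K, hK⟩
    refine ⟨max N K, fun n hn => ?_⟩
    have h1 := hN n (lt_of_le_of_lt (le_max_left N K) hn)
    have h2 := hK n (lt_of_le_of_lt (le_max_right N K) hn)
    show f n + g n = 0
    rw [h1, h2, add_zero]
  zero_mem' := ⟨0, fun _ _ => rfl⟩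
  smul_mem' := by
    rintro c f ⟨N, hN⟩
    refine ⟨N, fun n hn => ?_⟩
    show c • f n = 0
    rw [hN n hn, smul_zero]

/-- Functions `ℤ → M` with support bounded above; for `M = R` this realizes the
ring `R[[x⁻¹, x]]` of Laurent series with finitely many positive powers of `x`. -/
def IntBdd (R : Type u) [CommRing R] (M : Type u) [AddCommGroup M] [Module R M] :
    Submodule R (ℤ → M) where
  carrier := {f | ∃ N : ℤ, ∀ n : ℤ, N < n → f n = 0}
  add_mem' := by
    rintro f g ⟨N, hN⟩ ⟨K, hK⟩
    refine ⟨max N K, fun n hn => ?_⟩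
    have h1 := hN n (lt_of_le_of_lt (le_max_left N K) hn)
    have h2 := hK n (lt_of_le_of_lt (le_max_right N K) hn)
    show f n + g n = 0
    rw [h1, h2, add_zero]
  zero_mem' := ⟨0, fun _ _ => rfl⟩
  smul_mem' := by
    rintro c f ⟨N, hN⟩
    refine ⟨N, fun n hn => ?_⟩
    show c • f n = 0
    rw [hN n hn, smul_zero]

/-- The multiplication of `R[[x⁻¹, x]]`, realized as a convolution product on
functions `ℤ → R` with support bounded above. -/
noncomputable def lmul {R : Type u} [CommRing R] (f g : ↥(IntBdd R R)) : ↥(IntBdd R R) :=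
  ⟨fun n => ∑ᶠ i : ℤ, f.1 i * g.1 (n - i), by
    obtain ⟨N, hN⟩ := f.2
    obtain ⟨K, hK⟩ := g.2
    refine ⟨N + K, fun n hn => ?_⟩
    apply finsum_eq_zero_of_forall_eq_zero
    intro i
    by_cases h : N < i
    · rw [hN i h, zero_mul]
    · rw [hK (n - i) (by omega), mul_zero]⟩

namespace SComplexData

variable {R : Type u} [CommRing R]

/-- The carrier of the small equivariant complex `𝔣Ĉ_* = C_{*-1} ⊕ R[x]`,
with `R[x]` realized as finitely supported functions `ℕ → R`. -/
abbrev Small (X : SComplexData R) : Type u := X.Tot × ↥(NatBdd R R)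

/-- `Σᵢ vⁱ δ₂(aᵢ)` for a polynomial with coefficients `aᵢ`. -/
noncomputable def sumV (X : SComplexData R) (f : ↥(NatBdd R R)) : X.Tot :=
  ∑ᶠ i : ℕ, (X.v ^ i) (X.δ₂ (f.1 i))

/-- The differential `𝔡̂(α, Σᵢ aᵢxⁱ) = (dα − Σᵢ vⁱδ₂(aᵢ), 0)` of the small
equivariant complex. -/
noncomputable def smallD (X : SComplexData R) : X.Small → X.Small :=
  fun z => (X.d z.1 - X.sumV z.2, 0)

/-- The `R[x]`-module structure of the small equivariant complex:
`x · (α, p(x)) = (v(α), δ₁(α) + x·p(x))`; this is the action of `x`. -/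
noncomputable def xSmall (X : SComplexData R) : X.Small → X.Small :=
  fun z => (X.v z.1, ⟨fun n => if n = 0 then X.δ₁ z.1 else z.2.1 (n - 1), by
    obtain ⟨N, hN⟩ := z.2.2
    refine ⟨N + 1, fun n hn => ?_⟩
    show (if n = 0 then X.δ₁ z.1 else z.2.1 (n - 1)) = 0
    rw [if_neg (by omega)]
    exact hN (n - 1) (by omega)⟩)

/-- The map `𝔦 : 𝔣Ĉ_* → R[[x⁻¹, x]]`,
`𝔦(α, Σᵢ aᵢxⁱ) = Σ_{i ≤ −1} δ₁v^{−i−1}(α) xⁱ + Σᵢ aᵢxⁱ`. -/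
noncomputable def iota (X : SComplexData R) : X.Small → ↥(IntBdd R R) :=
  fun z => ⟨fun n => if n < 0 then X.δ₁ ((X.v ^ (-n - 1).toNat) z.1) else z.2.1 n.toNat, by
    obtain ⟨N, hN⟩ := z.2.2
    refine ⟨(N : ℤ), fun n hn => ?_⟩
    show (if n < 0 then X.δ₁ ((X.v ^ (-n - 1).toNat) z.1) else z.2.1 n.toNat) = 0
    rw [if_neg (by omega)]
    exact hN n.toNat (by omega)⟩

/-- `𝔍(C̃) = 𝔦(ker 𝔡̂)`, an `R[x]`-submodule of `R[[x⁻¹, x]]`, here recorded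
as a set. -/
noncomputable def JJ (X : SComplexData R) : Set ↥(IntBdd R R) :=
  X.iota '' {z | X.smallD z = 0}

/-- `DegEq Q n` means that the Laurent series `Q` is nonzero with `Deg Q = n`,
i.e. `n` is the largest exponent with nonzero coefficient. -/
def DegEq {R : Type u} [CommRing R] (Q : ↥(IntBdd R R)) (n : ℤ) : Prop :=
  Q.1 n ≠ 0 ∧ ∀ m : ℤ, n < m → Q.1 m = 0

/-- The set of degrees of nonzero elements of `𝔍(C̃)`. -/
noncomputable def degSet (X : SComplexData R) : Set ℤ :=
  {n : ℤ | ∃ Q ∈ X.JJ, DegEq Q n}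

/-- The Frøyshov invariant `h(C̃) = −inf {Deg Q : 0 ≠ Q ∈ 𝔍(C̃)}`. -/
noncomputable def hInv (X : SComplexData R) : ℤ := -sInf X.degSet

/-- The ideal `J_i(C̃) = {a ∈ R : ∃ Q = a·x^{−i} + (lower order terms) ∈ 𝔍(C̃)}`,
recorded as a set. -/
noncomputable def Jideal (X : SComplexData R) (i : ℤ) : Set R :=
  {a : R | ∃ Q ∈ X.JJ, (∀ m : ℤ, -i < m → Q.1 m = 0) ∧ Q.1 (-i) = a}

end SComplexData

namespace SComplexData

/-- The trivial S-complex `C̃⁰ = R`: its chain module is `C = 0` (so `C̃⁰`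
consists of the summand `R` alone, in degree `0`, with zero differential). -/
noncomputable def trivialS (R : Type u) [CommRing R] : SComplexData R where
  Tot := PUnit.{u + 1}
  grading := fun _ => ⊥
  sign := LinearMap.id
  d := 0
  v := 0
  δ₁ := 0
  δ₂ := 0

end SComplexData


section AuxProofs

namespace SComplexData

variable {R : Type u} [CommRing R] (A : SComplexData R)

/-- The linear equivalence from the direct sum of the graded pieces. -/
noncomputable def projE (h : DirectSum.IsInternal A.grading) :
    DirectSum ℤ (fun i => ↥(A.grading i)) ≃ₗ[R] A.Tot :=
  LinearEquiv.ofBijective (DirectSum.coeLinearMap A.grading) h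

/-- Projection onto the degree `j` part. -/
noncomputable def proj (h : DirectSum.IsInternal A.grading) (j : ℤ) : A.Tot →ₗ[R] A.Tot :=
  (A.grading j).subtype ∘ₗ (DirectSum.component R ℤ (fun i => ↥(A.grading i)) j) ∘ₗ
    (A.projE h).symm.toLinearMap

lemma proj_apply (h : DirectSum.IsInternal A.grading) (j : ℤ) (x : A.Tot) :
    A.proj h j x = ↑(((A.projE h).symm x) j) := rfl

lemma proj_mem (h : DirectSum.IsInternal A.grading) (j : ℤ) (x : A.Tot) :
    A.proj h j x ∈ A.grading j := SetLike.coe_mem _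

lemma proj_eq_self (h : DirectSum.IsInternal A.grading) {i : ℤ} {x : A.Tot}
    (hx : x ∈ A.grading i) : A.proj h i x = x := by
  rw [proj_apply]
  show ↑(((LinearEquiv.ofBijective (DirectSum.coeLinearMap A.grading) h).symm x) i) = x
  rw [h.ofBijective_coeLinearMap_of_mem hx]

lemma proj_eq_zero (h : DirectSum.IsInternal A.grading) {i : ℤ} {x : A.Tot}
    (hx : x ∈ A.grading i) {j : ℤ} (hij : i ≠ j) : A.proj h j x = 0 := by
  rw [proj_apply]
  show ↑(((LinearEquiv.ofBijective (DirectSum.coeLinearMap A.grading) h).symm x) j) = (0 : A.Tot)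
  rw [h.ofBijective_coeLinearMap_of_mem_ne hij hx]
  rfl

lemma exists_decomp (h : DirectSum.IsInternal A.grading) (x : A.Tot) :
    ∃ S : Finset ℤ, ∑ i ∈ S, A.proj h i x = x ∧ ∀ j ∉ S, A.proj h j x = 0 := by
  classical
  have key : ∀ i, A.proj h i x
      = DirectSum.coeLinearMap A.grading (DirectSum.of _ i (((A.projE h).symm x) i)) := by
    intro i; rw [proj_apply, DirectSum.coeLinearMap_of]
  refine ⟨((A.projE h).symm x).support, ?_, ?_⟩
  · rw [Finset.sum_congr rfl (fun i _ => key i), ← map_sum, DirectSum.sum_support_of]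
    have h2 := LinearEquiv.apply_symm_apply (A.projE h) x
    exact h2
  · intro j hj
    rw [proj_apply, DFinsupp.notMem_support_iff.mp hj]
    rfl

lemma proj_comm (h : DirectSum.IsInternal A.grading) (u : A.Tot →ₗ[R] A.Tot) (c : ℤ)
    (hu : ∀ i : ℤ, ∀ x ∈ A.grading i, u x ∈ A.grading (i + c)) (j : ℤ) (x : A.Tot) :
    A.proj h j (u x) = u (A.proj h (j - c) x) := by
  classical
  obtain ⟨S, hS, hS0⟩ := A.exists_decomp h x
  conv_lhs => rw [← hS]
  rw [map_sum, map_sum]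
  have hterm : ∀ i ∈ S, A.proj h j (u (A.proj h i x))
      = if i = j - c then u (A.proj h i x) else 0 := by
    intro i _
    by_cases hi : i = j - c
    · rw [if_pos hi]
      have hm := hu i _ (A.proj_mem h i x)
      have he : i + c = j := by omega
      exact A.proj_eq_self h (he ▸ hm)
    · rw [if_neg hi]
      exact A.proj_eq_zero h (hu i _ (A.proj_mem h i x)) (fun hc => hi (by omega))
  rw [Finset.sum_congr rfl hterm, Finset.sum_ite_eq' S (j - c) (fun i => u (A.proj h i x))]
  by_cases hjc : j - c ∈ S
  · rw [if_pos hjc]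
  · rw [if_neg hjc, hS0 _ hjc, map_zero]

lemma apply_proj (h : DirectSum.IsInternal A.grading) (f : A.Tot →ₗ[R] R) (k : ℤ)
    (hf : ∀ i : ℤ, i ≠ k → ∀ x ∈ A.grading i, f x = 0) (x : A.Tot) :
    f x = f (A.proj h k x) := by
  classical
  obtain ⟨S, hS, hS0⟩ := A.exists_decomp h x
  conv_lhs => rw [← hS]
  rw [map_sum]
  have hterm : ∀ i ∈ S, f (A.proj h i x) = if i = k then f (A.proj h i x) else 0 := by
    intro i _
    by_cases hi : i = k
    · rw [if_pos hi]
    · rw [if_neg hi]; exact hf i hi _ (A.proj_mem h i x)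
  rw [Finset.sum_congr rfl hterm, Finset.sum_ite_eq' S k (fun i => f (A.proj h i x))]
  by_cases hk : k ∈ S
  · rw [if_pos hk]
  · rw [if_neg hk, hS0 _ hk, map_zero]

lemma exists_bound (h : DirectSum.IsInternal A.grading) (hfin : Module.Finite R A.Tot) :
    ∃ M : ℕ, ∀ i : ℤ, M < i.natAbs → ∀ x ∈ A.grading i, x = 0 := by
  classical
  obtain ⟨s, hs⟩ := Module.Finite.fg_top (R := R) (M := A.Tot)
  choose S hS hS0 using fun g : A.Tot => A.exists_decomp h g
  refine ⟨(s.biUnion S).sup (fun i => i.natAbs), fun i hi x hx => ?_⟩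
  have hiT : i ∉ s.biUnion S := by
    intro hmem
    have hle' : i.natAbs ≤ (s.biUnion S).sup (fun i => i.natAbs) := Finset.le_sup hmem
    omega
  have hgen : ∀ g ∈ s, A.proj h i g = 0 := fun g hg =>
    hS0 g i (fun hmem => hiT (Finset.mem_biUnion.mpr ⟨g, hg, hmem⟩))
  have hle : Submodule.span R (↑s) ≤ LinearMap.ker (A.proj h i) :=
    Submodule.span_le.mpr (fun g hg => LinearMap.mem_ker.mpr (hgen g hg))
  have hxz : A.proj h i x = 0 := hle (by rw [hs]; trivial)
  rw [← A.proj_eq_self h hx, hxz]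

lemma v_pow_mem (hv : ∀ i : ℤ, (A.grading i).map A.v ≤ A.grading (i - 2)) :
    ∀ (m : ℕ) (i : ℤ), ∀ x ∈ A.grading i, (A.v ^ m) x ∈ A.grading (i - 2 * m) := by
  intro m
  induction m with
  | zero => intro i x hx; simpa using hx
  | succ n ih =>
    intro i x hx
    have h1 : A.v x ∈ A.grading (i - 2) := hv i (Submodule.mem_map_of_mem hx)
    have h2 := ih (i - 2) _ h1
    have he : i - 2 - 2 * (n : ℤ) = i - 2 * ((n : ℤ) + 1) := by ring
    have he2 : i - 2 * ((n : ℤ) + 1) = i - 2 * ((n + 1 : ℕ) : ℤ) := by push_cast; ring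
    rw [pow_succ, Module.End.mul_apply]
    rw [he, he2] at h2
    exact h2

lemma exists_nilpotent (h : DirectSum.IsInternal A.grading) (hfin : Module.Finite R A.Tot)
    (hv : ∀ i : ℤ, (A.grading i).map A.v ≤ A.grading (i - 2)) :
    ∃ N : ℕ, 0 < N ∧ ∀ a : ℕ, N ≤ a → ∀ x : A.Tot, (A.v ^ a) x = 0 := by
  obtain ⟨M, hM⟩ := A.exists_bound h hfin
  refine ⟨M + 1, Nat.succ_pos _, fun a ha x => ?_⟩
  obtain ⟨S, hS, -⟩ := A.exists_decomp h x
  conv_lhs => rw [← hS]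
  rw [map_sum]
  refine Finset.sum_eq_zero fun i _ => ?_
  by_cases hbig : M < i.natAbs
  · rw [hM i hbig _ (A.proj_mem h i x), map_zero]
  · exact hM (i - 2 * a) (by omega) _ (A.v_pow_mem hv a i _ (A.proj_mem h i x))

end SComplexData

/-- Factoring a functional through a linear map whose kernel it kills (field case). -/
lemma factor_thru {R : Type u} [Field R] {V : Type u} [AddCommGroup V] [Module R V]
    (T : V →ₗ[R] V) (f : V →ₗ[R] R) (hle : LinearMap.ker T ≤ LinearMap.ker f) :
    ∃ g : V →ₗ[R] R, g ∘ₗ T = f := by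
  obtain ⟨g, hg⟩ := LinearMap.exists_extend
    ((Submodule.liftQ _ f hle) ∘ₗ (T.quotKerEquivRange).symm.toLinearMap)
  refine ⟨g, ?_⟩
  ext x
  have h1 : g (T x) = g ((LinearMap.range T).subtype ⟨T x, LinearMap.mem_range_self T x⟩) := rfl
  have h2 := LinearMap.congr_fun hg ⟨T x, LinearMap.mem_range_self T x⟩
  have h3 : (T.quotKerEquivRange).symm ⟨T x, LinearMap.mem_range_self T x⟩
      = Submodule.Quotient.mk x := by
    rw [LinearEquiv.symm_apply_eq]
    rfl
  simp only [LinearMap.comp_apply] at h2 ⊢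
  rw [h1, h2]
  simp only [LinearMap.comp_apply, LinearEquiv.coe_toLinearMap, h3]
  exact Submodule.liftQ_apply _ f x

end AuxProofs

open SComplexData in
/-- **Statement 8.** Over a field `R`, an S-complex with `h(C̃) = 0` is locally
equivalent to the trivial S-complex `C̃⁰ = R`: there is `α ∈ C` with
`d α = δ₂ 1`; the map `λ̃ : C̃⁰ → C̃` with components `λ = 0`, `μ = 0`, `Δ₁ = 0`
and `Δ₂(1) = α` is a morphism of S-complexes; and there is also a morphism of
S-complexes `C̃ → C̃⁰`. -/
theorem statement8 {R : Type u} [Field R]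
    (A : SComplexData R) (hA : A.IsSComplex) (h0 : A.hInv = 0) :
    (∃ α : A.Tot, A.d α = A.δ₂ 1) ∧
    (∃ α : A.Tot, A.d α = A.δ₂ 1 ∧
      ∃ g : SMorphism (trivialS R) A,
        g.l = 0 ∧ g.μ = 0 ∧ g.Δ₁ = 0 ∧ g.Δ₂ 1 = α) ∧
    Nonempty (SMorphism (trivialS R) A) ∧
    Nonempty (SMorphism A (trivialS R)) := by
  classical
  obtain ⟨hint, hfree, hfin, hsign, hd_deg, hv_deg, hδ₁_deg, hδ₂_deg, hdd, hδ₁d, hdδ₂, hdv⟩ := hA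
  obtain ⟨N, hN0, hvN⟩ := A.exists_nilpotent hint hfin hv_deg
  -- `x^N` as an element of `NatBdd R R`
  set pN : ↥(NatBdd R R) := ⟨fun n => if n = N then (1 : R) else 0,
    ⟨N, fun n hn => if_neg (by omega)⟩⟩ with hpN
  have hsumVN : A.sumV pN = 0 := by
    rw [sumV, finsum_eq_single _ N (fun i hi => by
      show (A.v ^ i) (A.δ₂ (if i = N then (1:R) else 0)) = 0
      rw [if_neg hi, map_zero, map_zero])]
    show (A.v ^ N) (A.δ₂ (if N = N then (1:R) else 0)) = 0
    rw [if_pos rfl]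
    exact hvN N le_rfl _
  have hzN : A.smallD ((0 : A.Tot), pN) = 0 := by
    show (A.d 0 - A.sumV pN, (0 : ↥(NatBdd R R))) = 0
    rw [map_zero, hsumVN, sub_zero]
    rfl
  have hNdeg : (N : ℤ) ∈ A.degSet := by
    refine ⟨A.iota ((0 : A.Tot), pN), ⟨((0 : A.Tot), pN), hzN, rfl⟩, ?_, ?_⟩
    · show (if (N : ℤ) < 0 then A.δ₁ ((A.v ^ (-(N:ℤ) - 1).toNat) (0 : A.Tot))
          else (if ((N:ℤ)).toNat = N then (1:R) else 0)) ≠ 0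
      rw [if_neg (by omega), if_pos (by omega)]
      exact one_ne_zero
    · intro m hm
      show (if m < 0 then A.δ₁ ((A.v ^ (-m - 1).toNat) (0 : A.Tot))
          else (if m.toNat = N then (1:R) else 0)) = 0
      rw [if_neg (by omega), if_neg (by omega)]
  have hbdd : BddBelow A.degSet := by
    refine ⟨-(N : ℤ), fun n hn => ?_⟩
    by_contra hlt
    push_neg at hlt
    obtain ⟨Q, ⟨z, hz, rfl⟩, hne, -⟩ := hn
    apply hne
    show (if n < 0 then A.δ₁ ((A.v ^ (-n - 1).toNat) z.1) else z.2.1 n.toNat) = 0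
    rw [if_pos (by omega), hvN (-n - 1).toNat (by omega) z.1, map_zero]
  have hsInf : sInf A.degSet = 0 := by
    have : -sInf A.degSet = 0 := h0
    omega
  have h0mem : (0 : ℤ) ∈ A.degSet := hsInf ▸ Int.csInf_mem ⟨_, hNdeg⟩ hbdd
  have hlb : ∀ n ∈ A.degSet, (0 : ℤ) ≤ n := fun n hn => hsInf ▸ csInf_le hbdd hn
  -- extract α with d α = δ₂ 1
  obtain ⟨Q, hQJJ, hQne, hQtop⟩ := h0mem
  obtain ⟨z, hz, rfl⟩ := hQJJ
  have hdz : A.d z.1 = A.sumV z.2 := by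
    have h1 : (A.d z.1 - A.sumV z.2, (0 : ↥(NatBdd R R))) = (0 : A.Small) := hz
    have h2 : A.d z.1 - A.sumV z.2 = 0 := congrArg Prod.fst h1
    exact sub_eq_zero.mp h2
  have hp0 : ∀ i : ℕ, i ≠ 0 → z.2.1 i = 0 := by
    intro i hi
    have h1 := hQtop (i : ℤ) (by omega)
    have h2 : (if (i : ℤ) < 0 then A.δ₁ ((A.v ^ (-(i:ℤ) - 1).toNat) z.1) else z.2.1 ((i:ℤ)).toNat)
        = 0 := h1
    rwa [if_neg (by omega), Int.toNat_natCast] at h2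
  have ha : z.2.1 0 ≠ 0 := by
    have h2 : (if (0 : ℤ) < 0 then A.δ₁ ((A.v ^ (-(0:ℤ) - 1).toNat) z.1) else z.2.1 ((0:ℤ)).toNat)
        ≠ 0 := hQne
    rwa [if_neg (by omega)] at h2
  have hsum : A.sumV z.2 = A.δ₂ (z.2.1 0) := by
    rw [sumV, finsum_eq_single _ 0 (fun i hi => by rw [hp0 i hi, map_zero, map_zero])]
    rw [pow_zero, Module.End.one_apply]
  have hda : A.d ((z.2.1 0)⁻¹ • z.1) = A.δ₂ 1 := by
    rw [map_smul, hdz, hsum, ← map_smul, smul_eq_mul, inv_mul_cancel₀ ha]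
  -- project to degree -1
  have hd' : ∀ i : ℤ, ∀ x ∈ A.grading i, A.d x ∈ A.grading (i + (-1)) := by
    intro i x hx
    have := hd_deg i (Submodule.mem_map_of_mem hx)
    have he : i - 1 = i + (-1) := by ring
    rwa [he] at this
  set α' : A.Tot := A.proj hint (-1) ((z.2.1 0)⁻¹ • z.1) with hα'
  have hα'mem : α' ∈ A.grading (-1) := A.proj_mem hint _ _
  have hdα' : A.d α' = A.δ₂ 1 := by
    have hcomm := A.proj_comm hint A.d (-1) hd' (-2) ((z.2.1 0)⁻¹ • z.1)
    have he : (-2 : ℤ) - (-1) = -1 := by ring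
    rw [he] at hcomm
    have hmem : A.d ((z.2.1 0)⁻¹ • z.1) ∈ A.grading (-2) := hda ▸ hδ₂_deg ⟨1, rfl⟩
    rw [A.proj_eq_self hint hmem] at hcomm
    rw [hα', ← hcomm, hda]
  -- δ₁ vanishes on the kernel of d
  have hker : ∀ ξ : A.Tot, A.d ξ = 0 → A.δ₁ ξ = 0 := by
    intro ξ hξ
    by_contra hne
    have hsum0 : A.sumV (0 : ↥(NatBdd R R)) = 0 := by
      rw [sumV]
      apply finsum_eq_zero_of_forall_eq_zero
      intro i
      show (A.v ^ i) (A.δ₂ ((0 : ↥(NatBdd R R)).1 i)) = 0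
      show (A.v ^ i) (A.δ₂ ((0 : ℕ → R) i)) = 0
      rw [Pi.zero_apply, map_zero, map_zero]
    have hz2 : A.smallD (ξ, (0 : ↥(NatBdd R R))) = 0 := by
      show (A.d ξ - A.sumV 0, (0 : ↥(NatBdd R R))) = 0
      rw [hξ, hsum0, sub_zero]
      rfl
    have hQ2 : ∀ m : ℤ, (A.iota (ξ, (0 : ↥(NatBdd R R)))).1 m
        = if m < 0 then A.δ₁ ((A.v ^ (-m - 1).toNat) ξ) else 0 := by
      intro m
      show (if m < 0 then A.δ₁ ((A.v ^ (-m - 1).toNat) ξ) else ((0 : ↥(NatBdd R R)).1 m.toNat)) = _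
      by_cases hm : m < 0
      · rw [if_pos hm, if_pos hm]
      · rw [if_neg hm, if_neg hm]
        show ((0 : ℕ → R) m.toNat) = 0
        rfl
    obtain ⟨n₀, hn₀ne, hn₀max⟩ := Int.exists_greatest_of_bdd
      (P := fun m => (A.iota (ξ, (0 : ↥(NatBdd R R)))).1 m ≠ 0)
      ⟨-1, fun m hm => by
        by_contra hgt
        push_neg at hgt
        exact hm (by rw [hQ2 m, if_neg (by omega)])⟩
      ⟨-1, by
        show (A.iota (ξ, (0 : ↥(NatBdd R R)))).1 (-1) ≠ 0
        rw [hQ2 (-1), if_pos (by omega)]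
        simpa using hne⟩
    have hmem : n₀ ∈ A.degSet := by
      refine ⟨_, ⟨(ξ, (0 : ↥(NatBdd R R))), hz2, rfl⟩, hn₀ne, fun m hm => ?_⟩
      by_contra hne2
      have := hn₀max m hne2
      omega
    have h1 := hlb n₀ hmem
    have h2 : n₀ < 0 := by
      by_contra hge
      push_neg at hge
      exact hn₀ne (by rw [hQ2 n₀, if_neg (by omega)])
    omega
  -- factor δ₁ through d
  obtain ⟨g, hg⟩ := factor_thru A.d A.δ₁
    (fun ξ hξ => LinearMap.mem_ker.mpr (hker ξ (LinearMap.mem_ker.mp hξ)))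
  set Δ : A.Tot →ₗ[R] R := -(g ∘ₗ A.proj hint 0) with hΔ
  have hΔd : ∀ x : A.Tot, Δ (A.d x) = -A.δ₁ x := by
    intro x
    have h1 : A.proj hint 0 (A.d x) = A.d (A.proj hint 1 x) := by
      have hcomm := A.proj_comm hint A.d (-1) hd' 0 x
      have he : (0 : ℤ) - (-1) = 1 := by ring
      rwa [he] at hcomm
    have h2 : A.δ₁ x = A.δ₁ (A.proj hint 1 x) :=
      A.apply_proj hint A.δ₁ 1 (fun i hi y hy => hδ₁_deg i hi y hy) x
    have h3 : g (A.d (A.proj hint 1 x)) = A.δ₁ (A.proj hint 1 x) := LinearMap.congr_fun hg _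
    rw [hΔ]
    simp only [LinearMap.neg_apply, LinearMap.comp_apply]
    rw [h1, h3, ← h2]
  -- the morphism C̃⁰ → A
  have hmor1 : ∃ g1 : SMorphism (trivialS R) A,
      g1.l = 0 ∧ g1.μ = 0 ∧ g1.Δ₁ = 0 ∧ g1.Δ₂ 1 = α' := by
    refine ⟨⟨0, 0, 0, LinearMap.toSpanSingleton R A.Tot α', ?_, ?_, ?_, ?_, ?_, ?_, ?_, ?_⟩,
      rfl, rfl, rfl, by rw [LinearMap.toSpanSingleton_apply, one_smul]⟩
    · intro i
      show ((⊥ : Submodule R PUnit.{u+1}).map 0) ≤ A.grading i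
      simp
    · intro i
      show ((⊥ : Submodule R PUnit.{u+1}).map 0) ≤ A.grading (i - 1)
      simp
    · intro i _ x _
      rfl
    · rintro x ⟨r, rfl⟩
      rw [LinearMap.toSpanSingleton_apply]
      exact Submodule.smul_mem _ r hα'mem
    · ext x
      simp only [LinearMap.comp_apply, LinearMap.zero_apply, map_zero, LinearMap.add_apply,
        LinearMap.sub_apply, add_zero, sub_zero]
    · ext x
      simp only [LinearMap.comp_apply, LinearMap.zero_apply, map_zero, LinearMap.add_apply,
        LinearMap.sub_apply, add_zero, sub_zero]
      rw [show (trivialS R).δ₁ x = 0 from rfl, add_zero]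
    · apply LinearMap.ext_ring
      simp only [LinearMap.add_apply, LinearMap.comp_apply, LinearMap.zero_apply,
        LinearMap.toSpanSingleton_apply, one_smul, hdα']
      rw [add_zero]
    · ext x
      simp only [LinearMap.comp_apply, LinearMap.zero_apply, map_zero, LinearMap.add_apply,
        LinearMap.sub_apply, add_zero, sub_zero]
      rw [show (trivialS R).δ₁ x = 0 from rfl, map_zero, add_zero]
  -- the morphism A → C̃⁰
  have hmor2 : Nonempty (SMorphism A (trivialS R)) := by
    refine ⟨⟨0, 0, Δ, 0, ?_, ?_, ?_, ?_, ?_, ?_, ?_, ?_⟩⟩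
    · rintro i x ⟨y, hy, rfl⟩
      show (0 : PUnit.{u+1}) ∈ (⊥ : Submodule R PUnit.{u+1})
      exact Submodule.zero_mem _
    · rintro i x ⟨y, hy, rfl⟩
      show (0 : PUnit.{u+1}) ∈ (⊥ : Submodule R PUnit.{u+1})
      exact Submodule.zero_mem _
    · intro i hi x hx
      rw [hΔ]
      simp only [LinearMap.neg_apply, LinearMap.comp_apply]
      rw [A.proj_eq_zero hint hx hi, map_zero, neg_zero]
    · rintro x ⟨r, rfl⟩
      exact Submodule.zero_mem _
    · ext x
      exact Subsingleton.elim (α := PUnit.{u+1}) _ _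
    · ext x
      simp only [LinearMap.add_apply, LinearMap.comp_apply]
      rw [hΔd x]
      show -A.δ₁ x + A.δ₁ x = (trivialS R).δ₁ ((0 : A.Tot →ₗ[R] PUnit.{u+1}) x)
      rw [neg_add_cancel]
      rfl
    · ext r
      exact Subsingleton.elim (α := PUnit.{u+1}) _ _
    · ext x
      exact Subsingleton.elim (α := PUnit.{u+1}) _ _
  obtain ⟨g1, hg1⟩ := hmor1
  exact ⟨⟨α', hdα'⟩, ⟨α', hdα', g1, hg1⟩, ⟨g1⟩, hmor2⟩
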